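/- Let γ be a periodic orbit of a C¹ flow with period τ(γ) that is (C, η, T)-contracting at the period along an invariant bundle E: there exist m ∈ ℕ and, for x ∈ γ, a partition 0 = t_0 < t_1 < ⋯ < t_n = mτ(γ) with t_{i+1} − t_i ≤ T such that ∏_{i=0}^{n−1} ‖ψ_{t_{i+1}−t_i}|_{E(φ_{t_i}(x))}‖ ≤ C·exp(−η·mτ(γ)). Then for every η' ∈ (0, η) there exists N = N(C, T, η, η') > 0 such that if τ(γ) > N, then there exists a point x ∈ γ which is (1, η', T)-contracting: for the partition times s_k along the forward orbit of x obtained by cyclically repeating the given partition, ∏_{i=0}^{k−1} ‖ψ*_{s_{i+1}−s_i}|_{E(φ_{s_i}(x))}‖ ≤ exp(−η' s_k) for all k ≥ 1. -/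

import Mathlib

open Finset

/-- (Pliss lemma along a periodic orbit, for the scaled linear
Poincaré flow.)  We abstract the norms of the (scaled) linear Poincaré flow along the
periodic orbit `γ` of period `P = τ(γ)` through `x` as a function `ν t s`
(`= ‖ψ*_s|_{E(φ_t(x))}‖`): it is positive, submultiplicative, `P`-periodic in the base
time and bounded by `K` for `0 ≤ s ≤ T`.  Suppose `γ` is `(C,η,T,E)`-contracting at the
period: there are `m ≥ 1` and a partition `0 = t_0 < t_1 < ⋯ < t_n = m·P` (extended
periodically, with gaps `≤ T`) with `∏_{i<n} ν(t_i)(t_{i+1}−t_i) ≤ C·exp(−η·m·P)`.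
Then for every `η' ∈ (0,η)` there is `N = N(C,K,T,η,η') > 0` such that if `P > N` there
is a starting index `j` (i.e. a point `φ_{t_j}(x) ∈ γ`) with all forward partial
products `∏_{i<k} ν(t_{j+i})(t_{j+i+1}−t_{j+i}) ≤ exp(−η'·(t_{j+k}−t_j))`. -/
theorem stmt6 (C K T η η' : ℝ) (hC : 0 < C) (hK : 1 ≤ K) (hT : 0 < T)
    (hη : 0 < η) (hη' : 0 < η') (hη'η : η' < η) :
    ∃ N : ℝ, 0 < N ∧
      ∀ P : ℝ, N < P →
      ∀ ν : ℝ → ℝ → ℝ,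
        (∀ t s, 0 < ν t s) →
        (∀ t s₁ s₂, 0 ≤ s₁ → 0 ≤ s₂ → ν t (s₁ + s₂) ≤ ν (t + s₁) s₂ * ν t s₁) →
        (∀ t s, ν (t + P) s = ν t s) →
        (∀ t s, 0 ≤ s → s ≤ T → ν t s ≤ K) →
      ∀ (m n : ℕ) (tt : ℕ → ℝ),
        1 ≤ m → 1 ≤ n →
        tt 0 = 0 →
        (∀ i, tt i < tt (i + 1)) →
        (∀ i, tt (i + 1) - tt i ≤ T) →
        (∀ i, tt (i + n) = tt i + m * P) →
        (∏ i ∈ range n, ν (tt i) (tt (i + 1) - tt i) ≤ C * Real.exp (-η * (m * P))) →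
        ∃ j < n, ∀ k : ℕ, 1 ≤ k →
          ∏ i ∈ range k, ν (tt (j + i)) (tt (j + i + 1) - tt (j + i)) ≤
            Real.exp (-η' * (tt (j + k) - tt j)) := by
  have hd : 0 < η - η' := sub_pos.mpr hη'η
  refine ⟨(1 + |Real.log C|) / (η - η'), div_pos (by positivity) hd, ?_⟩
  intro P hP ν hνpos hνsub hνper hνK m n tt hm hn htt0 httlt httT httper hprod
  have hNpos : (0:ℝ) < (1 + |Real.log C|) / (η - η') := div_pos (by positivity) hd
  have hPpos : 0 < P := hNpos.trans hP
  -- ν is periodic with period q * P for every q : ℕ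
  have hνmP : ∀ (q : ℕ) (t s : ℝ), ν (t + q * P) s = ν t s := by
    intro q
    induction q with
    | zero => simp
    | succ q ih =>
      intro t s
      have : t + (↑(q + 1)) * P = (t + ↑q * P) + P := by push_cast; ring
      rw [this, hνper, ih]
  set b : ℕ → ℝ := fun i =>
    Real.log (ν (tt i) (tt (i + 1) - tt i)) + η' * (tt (i + 1) - tt i) with hbdef
  set S : ℕ → ℝ := fun k => ∑ i ∈ range k, b i with hSdef
  -- the sequence b is n-periodic
  have hbper : ∀ i, b (i + n) = b i := by
    intro i
    have h1 : tt (i + n) = tt i + m * P := httper i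
    have h2 : tt (i + n + 1) = tt (i + 1) + m * P := by
      have := httper (i + 1)
      rwa [show i + 1 + n = i + n + 1 from by omega] at this
    simp only [hbdef, h1, h2, hνmP m (tt i)]
    ring_nf
  have hSshift : ∀ r, S (n + r) = S n + S r := by
    intro r
    simp only [hSdef, Finset.sum_range_add]
    congr 1
    refine Finset.sum_congr rfl fun i _ => ?_
    rw [show n + i = i + n from by omega, hbper]
  have httn : tt n = m * P := by
    have := httper 0
    simpa [htt0] using this
  -- the sum over a full period is nonpositive
  have hSn : S n ≤ 0 := by
    have hpos : ∀ i ∈ range n, (0:ℝ) < ν (tt i) (tt (i + 1) - tt i) :=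
      fun i _ => hνpos _ _
    have hlog : Real.log (∏ i ∈ range n, ν (tt i) (tt (i + 1) - tt i)) ≤
        Real.log (C * Real.exp (-η * (m * P))) :=
      Real.log_le_log (Finset.prod_pos hpos) hprod
    rw [Real.log_prod (fun i hi => (hpos i hi).ne'),
      Real.log_mul hC.ne' (Real.exp_ne_zero _), Real.log_exp] at hlog
    have htel : ∑ i ∈ range n, (tt (i + 1) - tt i) = tt n - tt 0 :=
      Finset.sum_range_sub tt n
    have hSn' : S n = (∑ i ∈ range n, Real.log (ν (tt i) (tt (i + 1) - tt i)))
        + η' * (m * P) := by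
      simp only [hSdef, hbdef, Finset.sum_add_distrib, ← Finset.mul_sum, htel,
        httn, htt0, sub_zero]
    have hm1 : (1:ℝ) ≤ (m:ℕ) := by exact_mod_cast hm
    have hP' : (1 + |Real.log C|) < (η - η') * P := by
      rw [div_lt_iff₀ hd] at hP; linarith [hP]
    have habs : Real.log C ≤ |Real.log C| := le_abs_self _
    nlinarith [hlog, hSn', mul_pos hPpos hd]
  obtain ⟨j, hjmem, hjmax⟩ :=
    Finset.exists_max_image (range n) S ⟨0, mem_range.mpr (by omega)⟩
  refine ⟨j, mem_range.mp hjmem, ?_⟩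
  -- all partial sums from j are dominated by S j
  have key : ∀ l, S l ≤ S j := by
    intro l
    induction l using Nat.strong_induction_on with
    | _ l ih =>
      by_cases hl : l < n
      · exact hjmax l (mem_range.mpr hl)
      · push_neg at hl
        have hle : l = n + (l - n) := by omega
        have := ih (l - n) (by omega)
        rw [hle, hSshift]
        linarith
  intro k hk
  have h1 : S (j + k) ≤ S j := key (j + k)
  have h2 : S (j + k) = S j + ∑ i ∈ range k, b (j + i) := Finset.sum_range_add b j k
  have h3 : ∑ i ∈ range k, b (j + i) ≤ 0 := by linarith
  have hpos : ∀ i ∈ range k, (0:ℝ) < ν (tt (j + i)) (tt (j + i + 1) - tt (j + i)) :=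
    fun i _ => hνpos _ _
  rw [← Real.log_le_iff_le_exp (Finset.prod_pos hpos),
    Real.log_prod (fun i hi => (hpos i hi).ne')]
  have htel : ∑ i ∈ range k, (tt (j + i + 1) - tt (j + i)) = tt (j + k) - tt j := by
    have := Finset.sum_range_sub (fun i => tt (j + i)) k
    simpa [add_assoc] using this
  have hexp : ∑ i ∈ range k, b (j + i) =
      (∑ i ∈ range k, Real.log (ν (tt (j + i)) (tt (j + i + 1) - tt (j + i))))
      + η' * (tt (j + k) - tt j) := by
    simp only [hbdef, Finset.sum_add_distrib, ← Finset.mul_sum, htel]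
  linarith [h3, hexp.symm.le, hexp.le]
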